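/- arXiv:2510.09919 — 3 statements merged into one kernel-verified Lean document; each statement's English description precedes it below -/
import Mathlib

section
/- Existence of a moment-matched two-point pair: for every integer k ≥ 1 there exist a constant C_k > 0 and vectors u, v ∈ ℝ^k with ‖u‖_∞ ≤ 1 and ‖v‖_∞ ≤ 1 such that (i) m_1(u) = 0; (ii) m_p(u) = m_p(v) for all p = 1,…,k−1; and (iii) min{ W(u,v), |m_k(u) − m_k(v)| } ≥ C_k. -/
open MeasureTheory ProbabilityTheory Real
open scoped ENNReal NNReal

noncomputable section

/-- The probability simplex in `ℝ^k`. -/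
def simplex (k : ℕ) : Set (Fin k → ℝ) := {c | (∀ i, 0 ≤ c i) ∧ ∑ i, c i = 1}

/-- The Euclidean (ℓ₂) norm of a vector. -/
def l2norm {k : ℕ} (v : Fin k → ℝ) : ℝ := Real.sqrt (∑ i, v i ^ 2)

/-- The sorted (permutation-invariant) ℓ₁ loss `W`. -/
def sortedLoss {k : ℕ} (c c' : Fin k → ℝ) : ℝ :=
  ⨅ σ : Equiv.Perm (Fin k), ∑ i, |c (σ i) - c' i|

/-- The exponential measure with rate `r`. -/
def expMeas (r : ℝ) : Measure ℝ :=
  MeasureTheory.volume.withDensity fun x =>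
    ENNReal.ofReal (if 0 ≤ x then r * Real.exp (-(r * x)) else 0)

/-- The flat Dirichlet distribution on the simplex `Δ_d`: law of the normalization of
`d` i.i.d. rate-`d` exponential random variables. -/
def flatDirichlet (d : ℕ) : Measure (Fin d → ℝ) :=
  (Measure.pi fun _ : Fin d => expMeas d).map fun x j => x j / ∑ j', x j'

/-- Condition (PT): law of a random `k × d` matrix with i.i.d. flat-Dirichlet rows. -/
def ptLaw (k d : ℕ) : Measure (Fin k → Fin d → ℝ) :=
  Measure.pi fun _ : Fin k => flatDirichlet d

/-- Categorical measure on `Fin d` with weight vector `p`. -/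
def catMeas {d : ℕ} (p : Fin d → ℝ) : Measure (Fin d) :=
  ∑ j : Fin d, ENNReal.ofReal (p j) • Measure.dirac j

/-- The mixture pmf `j ↦ ∑_i c_i Π_{ij}`. -/
def mixP {k d : ℕ} (c : Fin k → ℝ) (P : Fin k → Fin d → ℝ) : Fin d → ℝ :=
  fun j => ∑ i, c i * P i j

/-- Joint law of the data `(Z, W)` in the multinomial model: conditionally on a (PT)
matrix `Π`, the `Z_ℓ` are i.i.d. from `∑_i c_i Π_{i·}` and the `W_{ir}` are i.i.d. from
`Π_{i·}`, all independent. -/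
def dataLaw (n d k m : ℕ) (c : Fin k → ℝ) :
    Measure ((Fin n → Fin d) × (Fin k → Fin m → Fin d)) :=
  (ptLaw k d).bind fun P =>
    (Measure.pi fun _ : Fin n => catMeas (mixP c P)).prod
      (Measure.pi fun i : Fin k => Measure.pi fun _ : Fin m => catMeas (P i))

/-- Law of the `Z`-samples alone (the `m = 0` multinomial model). -/
def dataLawZ (n d k : ℕ) (c : Fin k → ℝ) : Measure (Fin n → Fin d) :=
  (ptLaw k d).bind fun P => Measure.pi fun _ : Fin n => catMeas (mixP c P)

/-- Minimax ℓ₂ risk `M(n,d,k,m)` in the multinomial model. -/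
def minimaxRisk (n d k m : ℕ) : ℝ≥0∞ :=
  ⨅ (est : ((Fin n → Fin d) × (Fin k → Fin m → Fin d)) → (Fin k → ℝ))
    (_ : Measurable est),
    ⨆ c ∈ simplex k,
      ∫⁻ x, ENNReal.ofReal (l2norm fun i => est x i - c i) ∂ dataLaw n d k m c

/-- Sorted minimax risk `M_<(n,d,k,m)` in the multinomial model. -/
def sortedRisk (n d k m : ℕ) : ℝ≥0∞ :=
  ⨅ (est : ((Fin n → Fin d) × (Fin k → Fin m → Fin d)) → (Fin k → ℝ))
    (_ : Measurable est),
    ⨆ c ∈ simplex k,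
      ∫⁻ x, ENNReal.ofReal (sortedLoss (est x) c) ∂ dataLaw n d k m c

/-- Poisson measure on ℕ with mean `r`. -/
def poissonMeas (r : ℝ) : Measure ℕ :=
  Measure.sum fun x : ℕ =>
    ENNReal.ofReal (Real.exp (-r) * r ^ x / Nat.factorial x) • Measure.dirac x

/-- The unnormalized Poisson model `Q_c` on `ℕ × ℕ^k`. -/
def unnormQ (n m d k : ℕ) (c : Fin k → ℝ) : Measure (ℕ × (Fin k → ℕ)) :=
  (Measure.pi fun _ : Fin k => expMeas d).bind fun w =>
    (poissonMeas (n * ∑ i, c i * w i)).prod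
      (Measure.pi fun i : Fin k => poissonMeas (m * w i))

/-- The Poisson–exponential mixture `Q'_c` on ℕ. -/
def mixQ (n d k : ℕ) (c : Fin k → ℝ) : Measure ℕ :=
  (Measure.pi fun _ : Fin k => expMeas d).bind fun w =>
    poissonMeas (n * ∑ i, c i * w i)

/-- Condition (S) with parameter `γ`, with `ρ = min (m/d) 1`. -/
def condS (γ : ℝ) (n d k m : ℕ) : Prop :=
  (n : ℝ) ^ ((1 : ℝ) + γ) ≤ (d : ℝ) ∧
  ((n : ℝ) * m ≤ d ∨ (d : ℝ) ^ ((1 : ℝ) + γ) < (n : ℝ) * m) ∧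
  ((k : ℝ) ≤ Real.sqrt ((n : ℝ) * min ((m : ℝ) / d) 1) ∨
    Real.sqrt ((n : ℝ) * min ((m : ℝ) / d) 1) ^ ((1 : ℝ) + γ) < (k : ℝ)) ∧
  ((k ≤ d ∧ d ≤ m) ∨
    ((m : ℝ) ^ ((1 : ℝ) + γ) < (d : ℝ) ∧ (k : ℝ) ^ ((1 : ℝ) + γ) < (d : ℝ) / m))


lemma geom_aux (k : ℕ) (hk : 0 < k) (s : ℤ) :
    ∑ j : Fin k, Complex.exp (2 * π * Complex.I * s / k) ^ (j : ℕ)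
      = if (k : ℤ) ∣ s then (k : ℂ) else 0 := by
  have hk0 : (k : ℂ) ≠ 0 := Nat.cast_ne_zero.mpr hk.ne'
  rw [Fin.sum_univ_eq_sum_range]
  by_cases h : (k : ℤ) ∣ s
  · obtain ⟨n, rfl⟩ := h
    have h1 : Complex.exp (2 * π * Complex.I * ((k:ℤ) * n : ℤ) / k) = 1 := by
      rw [show (2 * π * Complex.I * ((k:ℤ) * n : ℤ) / k : ℂ) = (n:ℤ) * (2*π*Complex.I) by
        push_cast; field_simp]
      exact Complex.exp_int_mul_two_pi_mul_I n
    push_cast at h1 ⊢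
    simp [h1]
  · rw [if_neg h]
    set w := Complex.exp (2 * π * Complex.I * s / k) with hw
    have hw1 : w ≠ 1 := by
      intro hweq
      obtain ⟨n, hn⟩ := Complex.exp_eq_one_iff.mp hweq
      apply h
      have h2 : (s : ℂ) = (n : ℂ) * k := by
        have hne : (2 * π * Complex.I : ℂ) ≠ 0 := Complex.two_pi_I_ne_zero
        field_simp at hn
        apply mul_left_cancel₀ hne
        linear_combination (2 * π * Complex.I) * hn
      have h3 : s = n * k := by exact_mod_cast h2
      rw [h3]
      exact ⟨n, mul_comm n k⟩
    have hwk : w ^ k = 1 := by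
      rw [hw, ← Complex.exp_nat_mul]
      rw [show ((k:ℂ) * (2 * π * Complex.I * s / k)) = (s:ℤ) * (2*π*Complex.I) by field_simp]
      exact Complex.exp_int_mul_two_pi_mul_I s
    rw [geom_sum_eq hw1, hwk]
    simp

lemma cospow (x : ℝ) (p : ℕ) :
    ((Real.cos x : ℂ))^p = (1/2^p) * ∑ t ∈ Finset.range (p+1), (p.choose t : ℂ) *
      Complex.exp ((2*(t:ℂ) - p) * x * Complex.I) := by
  have h2 : ((2:ℂ)^p) ≠ 0 := pow_ne_zero _ two_ne_zero
  have h : (Real.cos x : ℂ) = (Complex.exp ((x:ℂ)*Complex.I) + Complex.exp (-(x:ℂ)*Complex.I)) / 2 := by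
    rw [Complex.ofReal_cos, eq_div_iff (two_ne_zero)]
    linear_combination Complex.two_cos (x:ℂ)
  rw [h, div_pow, add_pow, Finset.sum_div, one_div, Finset.mul_sum]
  apply Finset.sum_congr rfl
  intro t ht
  rw [Finset.mem_range] at ht
  have htp : t ≤ p := Nat.lt_succ_iff.mp ht
  rw [← Complex.exp_nat_mul, ← Complex.exp_nat_mul, ← Complex.exp_add,
    show ((t:ℂ) * ((x:ℂ)*Complex.I) + ((p-t:ℕ):ℂ) * (-(x:ℂ)*Complex.I)) = (2*(t:ℂ) - p) * x * Complex.I from by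
      rw [Nat.cast_sub htp]; ring]
  field_simp

lemma sum_cos_pow (k : ℕ) (hk : 0 < k) (c : ℝ) (p : ℕ) :
    ∑ j : Fin k, ((Real.cos ((2*(j:ℝ) + c) * (π/k)) : ℂ))^p
    = (1/2^p) * ∑ t ∈ Finset.range (p+1), (p.choose t : ℂ) *
        (Complex.exp ((2*(t:ℂ) - p) * c * (π/k) * Complex.I) *
         (if (k:ℤ) ∣ (2*t - p) then (k:ℂ) else 0)) := by
  have hk0 : (k : ℂ) ≠ 0 := Nat.cast_ne_zero.mpr hk.ne'
  simp_rw [cospow]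
  rw [← Finset.mul_sum]
  congr 1
  rw [Finset.sum_comm]
  apply Finset.sum_congr rfl
  intro t _
  rw [← Finset.mul_sum]
  congr 1
  have key : ∀ j : Fin k,
      Complex.exp ((2*(t:ℂ) - p) * (((2*(j:ℝ) + c) * (π/k) : ℝ) : ℂ) * Complex.I)
      = Complex.exp ((2*(t:ℂ) - p) * c * (π/k) * Complex.I) *
        Complex.exp (2 * π * Complex.I * ((2*t - p : ℤ) : ℂ) / k) ^ (j : ℕ) := by
    intro j
    rw [← Complex.exp_nat_mul, ← Complex.exp_add]
    congr 1
    push_cast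
    field_simp
    ring
  simp_rw [key]
  rw [← Finset.mul_sum]
  rw [geom_aux k hk (2*t - p)]

lemma sum_eq_lt (k : ℕ) (hk : 0 < k) (c c' : ℝ) (p : ℕ) (hp : p < k) :
    ∑ j : Fin k, (Real.cos ((2*(j:ℝ) + c) * (π/k)))^p
    = ∑ j : Fin k, (Real.cos ((2*(j:ℝ) + c') * (π/k)))^p := by
  have key : ∑ j : Fin k, ((Real.cos ((2*(j:ℝ) + c) * (π/k)) : ℂ))^p
      = ∑ j : Fin k, ((Real.cos ((2*(j:ℝ) + c') * (π/k)) : ℂ))^p := by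
    rw [sum_cos_pow k hk c p, sum_cos_pow k hk c' p]
    congr 1
    apply Finset.sum_congr rfl
    intro t ht
    rw [Finset.mem_range] at ht
    by_cases hdvd : (k:ℤ) ∣ (2*t - p)
    · have hts : (2*(t:ℤ) - p) = 0 := by
        apply Int.eq_zero_of_abs_lt_dvd hdvd
        have h1 : (t:ℤ) ≤ p := by exact_mod_cast Nat.lt_succ_iff.mp ht
        have h2 : (p:ℤ) < k := by exact_mod_cast hp
        rw [abs_lt]; omega
      have htc : (2*(t:ℂ) - p) = 0 := by exact_mod_cast hts
      rw [htc]
      simp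
    · rw [if_neg hdvd]
      simp
  exact_mod_cast key

lemma sum_one_zero (k : ℕ) (hk : 2 ≤ k) (c : ℝ) :
    ∑ j : Fin k, Real.cos ((2*(j:ℝ) + c) * (π/k)) = 0 := by
  have key : ∑ j : Fin k, ((Real.cos ((2*(j:ℝ) + c) * (π/k)) : ℂ))^1 = 0 := by
    rw [sum_cos_pow k (by omega) c 1]
    rw [Finset.sum_eq_zero, mul_zero]
    intro t ht
    rw [Finset.mem_range] at ht
    have hdvd : ¬ (k:ℤ) ∣ (2*t - (1:ℕ)) := by
      intro hd
      have hk2 : (2:ℤ) ≤ k := by exact_mod_cast hk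
      interval_cases t
      · have h2 : (k:ℤ) ∣ 1 := by
          have : ((2:ℤ)*(0:ℕ) - (1:ℕ)) = -1 := by norm_num
          rw [this] at hd
          exact (dvd_neg).mp hd
        have := Int.le_of_dvd one_pos h2
        omega
      · have h2 : (k:ℤ) ∣ 1 := by
          have : ((2:ℤ)*(1:ℕ) - (1:ℕ)) = 1 := by norm_num
          rwa [this] at hd
        have := Int.le_of_dvd one_pos h2
        omega
    rw [if_neg hdvd]
    simp
  simpa using (by exact_mod_cast key : ∑ j : Fin k, (Real.cos ((2*(j:ℝ) + c) * (π/k)))^1 = 0)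

lemma sum_range_eq_two (n : ℕ) (f : ℕ → ℂ) (hn : 0 < n)
    (h : ∀ t, t < n+1 → t ≠ 0 → t ≠ n → f t = 0) :
    ∑ t ∈ Finset.range (n+1), f t = f 0 + f n := by
  rw [← Finset.sum_pair hn.ne]
  symm
  apply Finset.sum_subset
  · intro t ht
    simp only [Finset.mem_insert, Finset.mem_singleton] at ht
    rw [Finset.mem_range]; omega
  · intro t ht hnot
    rw [Finset.mem_range] at ht
    simp only [Finset.mem_insert, Finset.mem_singleton, not_or] at hnot
    exact h t ht hnot.1 hnot.2

lemma sum_k_diff (k : ℕ) (hk : 0 < k) :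
    ∑ j : Fin k, (Real.cos ((2*(j:ℝ) + 0) * (π/k)))^k
    - ∑ j : Fin k, (Real.cos ((2*(j:ℝ) + 1) * (π/k)))^k = 4*k/2^k := by
  have hk0 : (k : ℂ) ≠ 0 := Nat.cast_ne_zero.mpr hk.ne'
  have key : ∑ j : Fin k, ((Real.cos ((2*(j:ℝ) + 0) * (π/k)) : ℂ))^k
      - ∑ j : Fin k, ((Real.cos ((2*(j:ℝ) + 1) * (π/k)) : ℂ))^k = 4*k/2^k := by
    rw [sum_cos_pow k hk 0 k, sum_cos_pow k hk 1 k, ← mul_sub, ← Finset.sum_sub_distrib]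
    rw [sum_range_eq_two k _ hk ?vanish]
    case vanish =>
      intro t ht ht0 htk
      by_cases hdvd : (k:ℤ) ∣ (2*t - k)
      · have hts : (2*(t:ℤ) - k) = 0 := by
          apply Int.eq_zero_of_abs_lt_dvd hdvd
          have h1 : (t:ℤ) ≤ k := by exact_mod_cast Nat.lt_succ_iff.mp ht
          have h2 : (t:ℤ) ≠ 0 := by exact_mod_cast ht0
          have h3 : (t:ℤ) ≠ k := by exact_mod_cast htk
          rw [abs_lt]; omega
        have htc : (2*(t:ℂ) - k) = 0 := by exact_mod_cast hts
        rw [htc]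
        ring
      · rw [if_neg hdvd]
        ring
    have d0 : (k:ℤ) ∣ 2 * ((0:ℕ):ℤ) - ((k:ℕ):ℤ) := by
      refine ⟨-1, by push_cast; ring⟩
    have dk : (k:ℤ) ∣ 2 * ((k:ℕ):ℤ) - ((k:ℕ):ℤ) := ⟨1, by push_cast; ring⟩
    rw [if_pos d0, if_pos dk]
    have z0 : Complex.exp ((2 * ((0:ℕ):ℂ) - ((k:ℕ):ℂ)) * ((0:ℝ):ℂ) * (((π:ℝ):ℂ)/((k:ℕ):ℂ)) * Complex.I) = 1 := by
      norm_num
    have zk : Complex.exp ((2 * ((k:ℕ):ℂ) - ((k:ℕ):ℂ)) * ((0:ℝ):ℂ) * (((π:ℝ):ℂ)/((k:ℕ):ℂ)) * Complex.I) = 1 := by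
      norm_num
    have e1 : Complex.exp ((2 * ((0:ℕ):ℂ) - ((k:ℕ):ℂ)) * ((1:ℝ):ℂ) * (((π:ℝ):ℂ)/((k:ℕ):ℂ)) * Complex.I) = -1 := by
      rw [show ((2 * ((0:ℕ):ℂ) - ((k:ℕ):ℂ)) * ((1:ℝ):ℂ) * (((π:ℝ):ℂ)/((k:ℕ):ℂ)) * Complex.I) = -((π:ℝ)*Complex.I) by
        push_cast; field_simp; ring]
      rw [Complex.exp_neg, Complex.exp_pi_mul_I]
      norm_num
    have e2 : Complex.exp ((2 * ((k:ℕ):ℂ) - ((k:ℕ):ℂ)) * ((1:ℝ):ℂ) * (((π:ℝ):ℂ)/((k:ℕ):ℂ)) * Complex.I) = -1 := by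
      rw [show ((2 * ((k:ℕ):ℂ) - ((k:ℕ):ℂ)) * ((1:ℝ):ℂ) * (((π:ℝ):ℂ)/((k:ℕ):ℂ)) * Complex.I) = ((π:ℝ)*Complex.I) by
        push_cast; field_simp; ring]
      exact Complex.exp_pi_mul_I
    rw [z0, zk, e1, e2, Nat.choose_self, Nat.choose_zero_right]
    push_cast
    field_simp
    ring
  have key' := key
  push_cast at key'
  rw [← Complex.ofReal_inj]
  push_cast
  linear_combination key'

/-- Existence of a moment-matched two-point pair: for every `k ≥ 1`
there are a constant `C_k > 0` and vectors `u, v` with entries bounded by 1 in absolute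
value such that `m_1(u) = 0`, the power sums of `u` and `v` agree up to order `k−1`, and
both `W(u,v)` and `|m_k(u) − m_k(v)|` are at least `C_k`. -/
theorem moment_matched_two_point (k : ℕ) (hk : 1 ≤ k) :
    ∃ C : ℝ, 0 < C ∧ ∃ u v : Fin k → ℝ,
      (∀ i, |u i| ≤ 1) ∧ (∀ i, |v i| ≤ 1) ∧
      (∑ i, u i = 0) ∧
      (∀ p : ℕ, 1 ≤ p → p < k → ∑ i, u i ^ p = ∑ i, v i ^ p) ∧
      C ≤ sortedLoss u v ∧ C ≤ |∑ i, u i ^ k - ∑ i, v i ^ k| := by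
  rcases eq_or_lt_of_le hk with h1 | h2
  · -- k = 1
    subst h1  -- careful direction
    refine ⟨1, one_pos, (fun _ => 0), (fun _ => 1), by norm_num, by norm_num, by simp, ?_, ?_, by simp⟩
    · intro p hp hpk; omega
    · apply le_ciInf
      intro σ
      simp
  · -- k ≥ 2
    have hk2 : 2 ≤ k := h2
    have hk0 : 0 < k := by omega
    have hkR : (k:ℝ) ≠ 0 := by positivity
    set u : Fin k → ℝ := fun j => Real.cos ((2*(j:ℝ) + 0) * (π/k)) with hu
    set v : Fin k → ℝ := fun j => Real.cos ((2*(j:ℝ) + 1) * (π/k)) with hv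
    have i0 : Fin k := ⟨0, hk0⟩
    have hNE : Nonempty (Fin k) := ⟨⟨0, hk0⟩⟩
    -- u i ≠ v 0 for all i
    have hne : ∀ i : Fin k, u i ≠ v ⟨0, hk0⟩ := by
      intro i heq
      rw [hu, hv] at heq
      simp only [Fin.val_mk, Nat.cast_zero, mul_zero, zero_add] at heq
      obtain ⟨n, hn | hn⟩ := Real.cos_eq_cos_iff.mp heq
      · have key : ((1:ℤ):ℝ) = ((2*n*k + 2*(i:ℕ) : ℤ):ℝ) := by
          push_cast
          have hπ := Real.pi_ne_zero
          field_simp at hn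
          apply mul_left_cancel₀ hπ
          linear_combination π * hn
        have h3 : (1:ℤ) = 2*n*k + 2*(i:ℕ) := by exact_mod_cast key
        obtain ⟨m, hm⟩ : ∃ m : ℤ, (1:ℤ) = 2*m := ⟨n*k + (i:ℕ), by linarith⟩
        omega
      · have key : ((1:ℤ):ℝ) = ((2*n*k - 2*(i:ℕ) : ℤ):ℝ) := by
          push_cast
          have hπ := Real.pi_ne_zero
          field_simp at hn
          apply mul_left_cancel₀ hπ
          linear_combination π * hn
        have h3 : (1:ℤ) = 2*n*k - 2*(i:ℕ) := by exact_mod_cast key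
        obtain ⟨m, hm⟩ : ∃ m : ℤ, (1:ℤ) = 2*m := ⟨n*k - (i:ℕ), by linarith⟩
        omega
    have hδpos : 0 < Finset.univ.inf' (Finset.univ_nonempty) (fun i => |u i - v ⟨0, hk0⟩|) := by
      rw [Finset.lt_inf'_iff]
      intro i _
      rw [abs_pos, sub_ne_zero]
      exact hne i
    set δ := Finset.univ.inf' (Finset.univ_nonempty) (fun i => |u i - v ⟨0, hk0⟩|) with hδ
    have hdiff : ∑ i, u i ^ k - ∑ i, v i ^ k = 4*k/2^k := sum_k_diff k hk0
    have hdpos : (0:ℝ) < 4*k/2^k := by positivity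
    refine ⟨min δ (4*k/2^k), lt_min hδpos hdpos, u, v, ?_, ?_, ?_, ?_, ?_, ?_⟩
    · intro i; exact Real.abs_cos_le_one _
    · intro i; exact Real.abs_cos_le_one _
    · exact sum_one_zero k hk2 0
    · intro p hp hpk
      exact sum_eq_lt k hk0 0 1 p hpk
    · refine le_trans (min_le_left _ _) ?_
      apply le_ciInf
      intro σ
      refine le_trans (Finset.inf'_le _ (Finset.mem_univ (σ ⟨0, hk0⟩))) ?_
      have : |u (σ ⟨0, hk0⟩) - v ⟨0, hk0⟩| = (fun i => |u (σ i) - v i|) ⟨0, hk0⟩ := rfl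
      rw [this]
      apply Finset.single_le_sum (f := fun i => |u (σ i) - v i|)
      · intro i _; positivity
      · exact Finset.mem_univ _
    · rw [hdiff, abs_of_pos hdpos]
      exact min_le_right _ _

end
end

section
/- Unbiasedness and variance of falling-factorial moment statistics in the Poisson–exponential mixture: let c ∈ Δ_k, let ϖ_1,…,ϖ_k be i.i.d. exponential random variables with rate d, set θ = ∑_{i=1}^k c_i ϖ_i, and conditionally on ϖ let Y ~ Poisson(nθ). For an integer ℓ ≥ 1 define Û_ℓ = Y(Y−1)⋯(Y−ℓ+1)/n^ℓ (equal to 0 when Y < ℓ). Then E[Û_ℓ] = E[θ^ℓ], and there exists a constant C_ℓ > 0 depending only on ℓ such that Var[Û_ℓ] ≤ C_ℓ / ( min{n,d}^ℓ · d^ℓ ). -/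
open MeasureTheory ProbabilityTheory Real
open scoped ENNReal NNReal

noncomputable section

/-- Joint law of `(ϖ, Y)` where `ϖ` has i.i.d. rate-`d` exponential coordinates and,
conditionally on `ϖ`, `Y ~ Poisson(n ∑_i c_i ϖ_i)`. -/
def thetaYLaw (n d k : ℕ) (c : Fin k → ℝ) : Measure ((Fin k → ℝ) × ℕ) :=
  (Measure.pi fun _ : Fin k => expMeas d).bind fun w =>
    (Measure.dirac w).prod (poissonMeas (n * ∑ i, c i * w i))

/-- The statistic `Û_ℓ = Y(Y−1)⋯(Y−ℓ+1)/n^ℓ` (automatically `0` when `Y < ℓ`). -/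
def fallingStat (n l : ℕ) (p : (Fin k → ℝ) × ℕ) : ℝ :=
  (∏ t ∈ Finset.range l, ((p.2 : ℝ) - t)) / (n : ℝ) ^ l

namespace FFMaux

/-! ### Poisson pmf facts -/

def pois (r : ℝ) (y : ℕ) : ℝ := Real.exp (-r) * r ^ y / Nat.factorial y

lemma pois_nonneg {r : ℝ} (hr : 0 ≤ r) (y : ℕ) : 0 ≤ pois r y := by
  unfold pois; positivity

lemma measurable_pois (y : ℕ) : Measurable fun r : ℝ => pois r y := by
  unfold pois; fun_prop

def desc (l y : ℕ) : ℝ := ∏ t ∈ Finset.range l, ((y : ℝ) - t)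

lemma desc_eq (l y : ℕ) : desc l y = (y.descFactorial l : ℝ) := by
  rcases lt_or_ge y l with h | h
  · rw [desc, Finset.prod_eq_zero (Finset.mem_range.mpr h) (by simp),
      Nat.descFactorial_eq_zero_iff_lt.mpr h, Nat.cast_zero]
  · rw [desc, Nat.descFactorial_eq_prod_range, Nat.cast_prod]
    refine Finset.prod_congr rfl fun i hi => ?_
    rw [Nat.cast_sub (((Finset.mem_range.mp hi).le).trans h)]

lemma desc_nonneg (l y : ℕ) : 0 ≤ desc l y := by
  rw [desc_eq]; exact Nat.cast_nonneg _

lemma descFactorial_add (y a b : ℕ) :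
    y.descFactorial (a + b) = y.descFactorial a * (y - a).descFactorial b := by
  induction b with
  | zero => simp
  | succ b ih =>
    rw [show a + (b + 1) = (a + b) + 1 by omega, Nat.descFactorial_succ, ih,
      Nat.descFactorial_succ, Nat.sub_sub]
    ring

lemma descFactorial_factorial (z l : ℕ) :
    (z + l).descFactorial l * z.factorial = (z + l).factorial := by
  induction l generalizing z with
  | zero => simp
  | succ l ih =>
    have h1 : z + (l + 1) = (z + 1) + l := by omega
    rw [h1, Nat.descFactorial_succ, show z + 1 + l - l = z + 1 by omega]
    calc (z + 1) * ((z + 1 + l).descFactorial l) * z.factorial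
        = (z + 1 + l).descFactorial l * ((z + 1) * z.factorial) := by ring
      _ = (z + 1 + l).descFactorial l * (z + 1).factorial := by rw [Nat.factorial_succ]
      _ = (z + 1 + l).factorial := ih (z + 1)

lemma hasSum_pois_desc {r : ℝ} (hr : 0 ≤ r) (l : ℕ) :
    HasSum (fun y => pois r y * desc l y) (r ^ l) := by
  have h : HasSum (fun z : ℕ => r ^ z / z.factorial) (Real.exp r) := by
    rw [Real.exp_eq_exp_ℝ]; exact NormedSpace.expSeries_div_hasSum_exp r
  have h2 := h.mul_left (Real.exp (-r) * r ^ l)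
  have hval : Real.exp (-r) * r ^ l * Real.exp r = r ^ l := by
    rw [Real.exp_neg]
    field_simp
  rw [hval] at h2
  have hcomp : (fun z : ℕ => Real.exp (-r) * r ^ l * (r ^ z / z.factorial))
      = (fun y => pois r y * desc l y) ∘ (· + l) := by
    funext z
    have hfac : ((z + l).descFactorial l : ℝ) * (z.factorial : ℝ) = ((z + l).factorial : ℝ) := by
      exact_mod_cast congrArg (Nat.cast (R := ℝ)) (descFactorial_factorial z l)
    have hz : (z.factorial : ℝ) ≠ 0 := by positivity
    have hzl : ((z + l).factorial : ℝ) ≠ 0 := by positivity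
    simp only [Function.comp_apply, pois, desc_eq]
    rw [pow_add]
    field_simp
    rw [← hfac]
    ring
  rw [hcomp] at h2
  refine ((add_left_injective l).hasSum_iff fun y hy => ?_).mp h2
  have hyl : y < l := by
    by_contra hge
    exact hy ⟨y - l, by dsimp only; omega⟩
  rw [desc_eq, Nat.descFactorial_eq_zero_iff_lt.mpr hyl, Nat.cast_zero, mul_zero]

lemma poissonMeas_apply (r : ℝ) (s : Set ℕ) :
    poissonMeas r s = ∑' y, ENNReal.ofReal (pois r y) * s.indicator 1 y := by
  rw [poissonMeas, Measure.sum_apply _ MeasurableSet.of_discrete]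
  refine tsum_congr fun y => ?_
  rw [Measure.smul_apply, Measure.dirac_apply' _ MeasurableSet.of_discrete, smul_eq_mul, pois]

lemma lintegral_poissonMeas (r : ℝ) (f : ℕ → ℝ≥0∞) :
    ∫⁻ y, f y ∂poissonMeas r = ∑' y, ENNReal.ofReal (pois r y) * f y := by
  rw [poissonMeas, lintegral_sum_measure]
  refine tsum_congr fun y => ?_
  rw [lintegral_smul_measure, lintegral_dirac]
  rfl

lemma tsum_pois_mul {r : ℝ} (hr : 0 ≤ r) {g : ℕ → ℝ} (hg : ∀ y, 0 ≤ g y) {a : ℝ}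
    (h : HasSum (fun y => pois r y * g y) a) :
    (∑' y, ENNReal.ofReal (pois r y) * ENNReal.ofReal (g y)) = ENNReal.ofReal a := by
  have : (fun y => ENNReal.ofReal (pois r y) * ENNReal.ofReal (g y))
      = fun y => ENNReal.ofReal (pois r y * g y) := by
    funext y; rw [ENNReal.ofReal_mul (pois_nonneg hr y)]
  rw [this, ← ENNReal.ofReal_tsum_of_nonneg (fun y => mul_nonneg (pois_nonneg hr y) (hg y))
    h.summable, h.tsum_eq]

lemma tsum_pois {r : ℝ} (hr : 0 ≤ r) : (∑' y, ENNReal.ofReal (pois r y)) = 1 := by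
  have h := hasSum_pois_desc hr 0
  simp only [desc, Finset.range_zero, Finset.prod_empty, mul_one, pow_zero] at h
  have := tsum_pois_mul hr (g := fun _ => (1 : ℝ)) (fun _ => zero_le_one) (by simpa using h)
  simpa using this


end FFMaux

instance poissonMeas_sfinite (r : ℝ) : SFinite (poissonMeas r) := by
  unfold poissonMeas; infer_instance

namespace FFMaux

variable {k : ℕ}

lemma measurable_theta (c : Fin k → ℝ) : Measurable fun w : Fin k → ℝ => ∑ i, c i * w i := by
  fun_prop

lemma measurable_kernel (n : ℕ) (c : Fin k → ℝ) :
    Measurable fun w : Fin k → ℝ =>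
      (Measure.dirac w).prod (poissonMeas (n * ∑ i, c i * w i)) := by
  apply Measure.measurable_of_measurable_coe
  intro s hs
  have key : ∀ w : Fin k → ℝ,
      (Measure.dirac w).prod (poissonMeas (n * ∑ i, c i * w i)) s
        = ∑' y, ENNReal.ofReal (pois ((n : ℝ) * ∑ i, c i * w i) y) * s.indicator 1 (w, y) := by
    intro w
    rw [Measure.dirac_prod, Measure.map_apply measurable_prodMk_left hs, poissonMeas_apply]
    refine tsum_congr fun y => ?_
    have hind : (Prod.mk w ⁻¹' s).indicator (1 : ℕ → ℝ≥0∞) y = s.indicator 1 (w, y) := by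
      by_cases hy : (w, y) ∈ s <;> simp [hy]
    rw [hind]
  simp_rw [key]
  refine Measurable.ennreal_tsum fun y => Measurable.mul ?_ ?_
  · exact ENNReal.measurable_ofReal.comp
      ((measurable_pois y).comp ((measurable_theta c).const_mul _))
  · exact (measurable_one.indicator hs).comp (measurable_id.prodMk measurable_const)

lemma lintegral_thetaYLaw (n d : ℕ) (c : Fin k → ℝ) {F : (Fin k → ℝ) × ℕ → ℝ≥0∞}
    (hF : Measurable F) :
    ∫⁻ p, F p ∂thetaYLaw n d k c
      = ∫⁻ w, ∑' y, ENNReal.ofReal (pois ((n : ℝ) * ∑ i, c i * w i) y) * F (w, y)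
          ∂(Measure.pi fun _ : Fin k => expMeas d) := by
  rw [thetaYLaw, Measure.lintegral_bind (measurable_kernel n c).aemeasurable hF.aemeasurable]
  refine lintegral_congr fun w => ?_
  rw [Measure.dirac_prod, lintegral_map hF measurable_prodMk_left, lintegral_poissonMeas]

lemma integrableOn_exp_pow {r : ℝ} (hr : 0 < r) (m : ℕ) :
    IntegrableOn (fun x : ℝ => r * Real.exp (-(r * x)) * x ^ m) (Set.Ioi 0) := by
  have h := integrableOn_rpow_mul_exp_neg_mul_rpow (neg_one_lt_zero.trans_le (Nat.cast_nonneg m)) zero_lt_one hr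
  have h2 := h.const_mul r
  refine h2.congr ((ae_restrict_iff' measurableSet_Ioi).mpr (ae_of_all _ fun x hx => ?_))
  dsimp only
  rw [Real.rpow_one, Real.rpow_natCast, neg_mul]
  ring

lemma integral_exp_pow {r : ℝ} (hr : 0 < r) (m : ℕ) :
    ∫ x in Set.Ioi (0:ℝ), r * Real.exp (-(r * x)) * x ^ m = m.factorial / r ^ m := by
  have h := integral_rpow_mul_exp_neg_mul_rpow (by norm_num : (0:ℝ) < 1)
    (neg_one_lt_zero.trans_le (Nat.cast_nonneg m)) hr
  have step : ∫ x in Set.Ioi (0:ℝ), r * Real.exp (-(r * x)) * x ^ m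
      = r * ∫ x in Set.Ioi (0:ℝ), x ^ (m:ℝ) * Real.exp (-r * x ^ (1:ℝ)) := by
    rw [← integral_const_mul]
    refine setIntegral_congr_fun measurableSet_Ioi fun x hx => ?_
    rw [Real.rpow_one, Real.rpow_natCast, neg_mul]
    ring
  rw [step, h, div_one, div_one, div_one, Real.Gamma_nat_eq_factorial,
    show ((m:ℝ) + 1) = ((m + 1 : ℕ) : ℝ) by push_cast; ring,
    Real.rpow_neg hr.le, Real.rpow_natCast]
  have hrm' : r ^ m ≠ 0 := by positivity
  field_simp [pow_succ]
  ring

lemma expMeas_lintegral_pow {r : ℝ} (hr : 0 < r) (m : ℕ) :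
    ∫⁻ x, ENNReal.ofReal (x ^ m) ∂expMeas r
      = ENNReal.ofReal (m.factorial / r ^ m) := by
  have hg : Measurable fun x : ℝ =>
      ENNReal.ofReal (if 0 ≤ x then r * Real.exp (-(r * x)) else 0) := by
    apply ENNReal.measurable_ofReal.comp
    apply Measurable.ite measurableSet_Ici <;> fun_prop
  rw [expMeas, lintegral_withDensity_eq_lintegral_mul _ hg
    ((by fun_prop : Measurable fun x : ℝ => ENNReal.ofReal (x ^ m)))]
  have heq : ∀ x : ℝ,
      ((fun x : ℝ => ENNReal.ofReal (if 0 ≤ x then r * Real.exp (-(r * x)) else 0)) *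
        fun x : ℝ => ENNReal.ofReal (x ^ m)) x
      = (Set.Ici (0:ℝ)).indicator
          (fun x => ENNReal.ofReal (r * Real.exp (-(r * x)) * x ^ m)) x := by
    intro x
    by_cases hx : (0:ℝ) ≤ x
    · rw [Pi.mul_apply, Set.indicator_of_mem (Set.mem_Ici.mpr hx), if_pos hx,
        ← ENNReal.ofReal_mul (by positivity)]
    · rw [Pi.mul_apply, Set.indicator_of_notMem (by simpa using hx : x ∉ Set.Ici (0:ℝ)), if_neg hx, ENNReal.ofReal_zero, zero_mul]
  rw [lintegral_congr heq, lintegral_indicator measurableSet_Ici,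
    setLIntegral_congr (Filter.EventuallyEq.symm Ioi_ae_eq_Ici)]
  rw [← ofReal_integral_eq_lintegral_ofReal ((integrableOn_exp_pow hr m))
    ((ae_restrict_iff' measurableSet_Ioi).mpr (ae_of_all _ fun x hx => by
      have hx' : 0 < x := hx
      positivity))]
  rw [integral_exp_pow hr m]

lemma expMeas_prob {r : ℝ} (hr : 0 < r) : IsProbabilityMeasure (expMeas r) := by
  constructor
  have h := expMeas_lintegral_pow hr 0
  simpa using h

lemma expMeas_Iio {r : ℝ} : expMeas r (Set.Iio 0) = 0 := by
  have h0 : ∫⁻ x in Set.Iio (0:ℝ),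
        ENNReal.ofReal (if 0 ≤ x then r * Real.exp (-(r * x)) else 0)
      = ∫⁻ _x in Set.Iio (0:ℝ), (0:ℝ≥0∞) :=
    setLIntegral_congr_fun measurableSet_Iio (fun x hx => by
      rw [if_neg (not_le.mpr hx), ENNReal.ofReal_zero])
  rw [expMeas, withDensity_apply _ measurableSet_Iio, h0, lintegral_zero]

lemma pi_map_eval {α : Type*} [MeasurableSpace α] (μ : Measure α) [IsProbabilityMeasure μ]
    (i : Fin k) :
    (Measure.pi fun _ : Fin k => μ).map (fun w => w i) = μ := by
  ext s hs
  rw [Measure.map_apply (measurable_pi_apply i) hs]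
  have hpre : (fun w : Fin k → α => w i) ⁻¹' s
      = Set.pi Set.univ (Function.update (fun _ : Fin k => (Set.univ : Set α)) i s) := by
    ext w
    constructor
    · intro h j _
      rcases eq_or_ne j i with rfl | hj
      · simpa using h
      · simp [Function.update_of_ne hj]
    · intro h
      have := h i (Set.mem_univ i)
      simpa using this
  rw [hpre, Measure.pi_pi]
  rw [show (fun j : Fin k => μ (Function.update (fun _ : Fin k => (Set.univ : Set α)) i s j))
      = fun j => if j = i then μ s else 1 from funext fun j => by
        rcases eq_or_ne j i with rfl | hj
        · simp
        · simp [Function.update_of_ne hj, hj]]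
  simp


lemma lintegral_pi_eval {α : Type*} [MeasurableSpace α] (μ : Measure α)
    [IsProbabilityMeasure μ] (i : Fin k) {g : α → ℝ≥0∞} (hg : Measurable g) :
    ∫⁻ w : Fin k → α, g (w i) ∂(Measure.pi fun _ : Fin k => μ) = ∫⁻ x, g x ∂μ := by
  conv_rhs => rw [← pi_map_eval μ i]
  rw [lintegral_map hg (measurable_pi_apply i)]

lemma ae_nonneg_pi {r : ℝ} (hr : 0 < r) :
    ∀ᵐ w : Fin k → ℝ ∂(Measure.pi fun _ : Fin k => expMeas r), ∀ i, 0 ≤ w i := by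
  haveI := expMeas_prob hr
  rw [ae_all_iff]
  intro i
  rw [ae_iff]
  have hset : {w : Fin k → ℝ | ¬ 0 ≤ w i} = (fun w : Fin k → ℝ => w i) ⁻¹' Set.Iio 0 := by
    ext w; simp [not_le]
  rw [hset, ← Measure.map_apply (measurable_pi_apply i) measurableSet_Iio, pi_map_eval,
    expMeas_Iio]

lemma lintegral_theta_pow {r : ℝ} (hr : 0 < r) {c : Fin k → ℝ} (hc0 : ∀ i, 0 ≤ c i)
    (hc1 : ∑ i, c i = 1) (m : ℕ) :
    ∫⁻ w, ENNReal.ofReal ((∑ i, c i * w i) ^ m) ∂(Measure.pi fun _ : Fin k => expMeas r)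
      ≤ ENNReal.ofReal (m.factorial / r ^ m) := by
  haveI := expMeas_prob hr
  have hmeas : ∀ i : Fin k, Measurable fun w : Fin k → ℝ =>
      ENNReal.ofReal (c i) * ENNReal.ofReal ((w i) ^ m) := by
    intro i; fun_prop
  have step1 : ∫⁻ w, ENNReal.ofReal ((∑ i, c i * w i) ^ m)
        ∂(Measure.pi fun _ : Fin k => expMeas r)
      ≤ ∫⁻ w, ∑ i, ENNReal.ofReal (c i) * ENNReal.ofReal ((w i) ^ m)
        ∂(Measure.pi fun _ : Fin k => expMeas r) := by
    refine lintegral_mono_ae ?_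
    filter_upwards [ae_nonneg_pi hr] with w hw
    have hconv : (∑ i, c i * w i) ^ m ≤ ∑ i, c i * (w i) ^ m := by
      have h := (convexOn_pow (𝕜 := ℝ) m).map_sum_le (t := Finset.univ)
        (fun i _ => hc0 i) hc1 (fun i _ => Set.mem_Ici.mpr (hw i))
      simpa [smul_eq_mul] using h
    calc ENNReal.ofReal ((∑ i, c i * w i) ^ m)
        ≤ ENNReal.ofReal (∑ i, c i * (w i) ^ m) := ENNReal.ofReal_le_ofReal hconv
      _ = ∑ i, ENNReal.ofReal (c i) * ENNReal.ofReal ((w i) ^ m) := by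
          rw [ENNReal.ofReal_sum_of_nonneg
            (fun i _ => mul_nonneg (hc0 i) (pow_nonneg (hw i) m))]
          exact Finset.sum_congr rfl fun i _ => ENNReal.ofReal_mul (hc0 i)
  refine step1.trans ?_
  rw [lintegral_finset_sum _ (fun i _ => hmeas i)]
  have step2 : ∀ i : Fin k, ∫⁻ w, ENNReal.ofReal (c i) * ENNReal.ofReal ((w i) ^ m)
        ∂(Measure.pi fun _ : Fin k => expMeas r)
      = ENNReal.ofReal (c i) * ENNReal.ofReal (m.factorial / r ^ m) := by
    intro i
    rw [lintegral_const_mul _ (by fun_prop : Measurable fun w : Fin k → ℝ =>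
      ENNReal.ofReal ((w i) ^ m))]
    rw [lintegral_pi_eval (expMeas r) i
      (by fun_prop : Measurable fun x : ℝ => ENNReal.ofReal (x ^ m)),
      expMeas_lintegral_pow hr m]
  simp_rw [step2]
  rw [← Finset.sum_mul, ← ENNReal.ofReal_sum_of_nonneg (fun i _ => hc0 i), hc1,
    ENNReal.ofReal_one, one_mul]

lemma thetaYLaw_ae_fst (n d : ℕ) (c : Fin k → ℝ) {A : Set (Fin k → ℝ)}
    (hA : MeasurableSet A)
    (h : ∀ᵐ w ∂(Measure.pi fun _ : Fin k => expMeas d), w ∉ A) :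
    ∀ᵐ p ∂thetaYLaw n d k c, p.1 ∉ A := by
  rw [ae_iff]
  have hset : {p : (Fin k → ℝ) × ℕ | ¬ p.1 ∉ A} = Prod.fst ⁻¹' A := by ext p; simp
  rw [hset, thetaYLaw, Measure.bind_apply (hA.preimage measurable_fst)
    (measurable_kernel n c).aemeasurable]
  have hz : ∀ᵐ w ∂(Measure.pi fun _ : Fin k => expMeas d),
      (Measure.dirac w).prod (poissonMeas (n * ∑ i, c i * w i)) (Prod.fst ⁻¹' A) = 0 := by
    filter_upwards [h] with w hw
    rw [Measure.dirac_prod, Measure.map_apply measurable_prodMk_left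
      (hA.preimage measurable_fst)]
    have he : (Prod.mk w ⁻¹' (Prod.fst ⁻¹' A)) = (∅ : Set ℕ) := by
      ext y; simp [hw]
    rw [he, measure_empty]
  rw [lintegral_congr_ae hz, lintegral_zero]

lemma thetaYLaw_prob (n d : ℕ) (hd : 0 < d) (c : Fin k → ℝ) (hc0 : ∀ i, 0 ≤ c i) :
    IsProbabilityMeasure (thetaYLaw n d k c) := by
  constructor
  have hdr : (0:ℝ) < (d:ℝ) := by exact_mod_cast hd
  haveI := expMeas_prob hdr
  rw [thetaYLaw, Measure.bind_apply MeasurableSet.univ (measurable_kernel n c).aemeasurable]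
  have h1 : ∀ᵐ w ∂(Measure.pi fun _ : Fin k => expMeas d),
      (Measure.dirac w).prod (poissonMeas (n * ∑ i, c i * w i)) Set.univ = 1 := by
    filter_upwards [ae_nonneg_pi hdr] with w hw
    have hθ : 0 ≤ (n:ℝ) * ∑ i, c i * w i :=
      mul_nonneg (Nat.cast_nonneg n)
        (Finset.sum_nonneg fun i _ => mul_nonneg (hc0 i) (hw i))
    rw [Measure.dirac_prod, Measure.map_apply measurable_prodMk_left MeasurableSet.univ,
      Set.preimage_univ, poissonMeas_apply]
    simpa using tsum_pois hθ
  rw [lintegral_congr_ae h1, lintegral_one, measure_univ]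

lemma desc_sq_le {l : ℕ} (hl : 1 ≤ l) (y : ℕ) :
    desc l y ^ 2 ≤ 2 ^ l * desc (2 * l) y + (4 * (l:ℝ)) ^ l * desc l y := by
  have key : (y.descFactorial l) ^ 2
      ≤ 2 ^ l * y.descFactorial (2 * l) + (4 * l) ^ l * y.descFactorial l := by
    rcases lt_or_ge y (4 * l) with h4 | h4
    · have h1 : y.descFactorial l ≤ (4 * l) ^ l :=
        le_trans (Nat.descFactorial_le_pow y l) (Nat.pow_le_pow_left h4.le l)
      calc (y.descFactorial l) ^ 2 = y.descFactorial l * y.descFactorial l := sq _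
        _ ≤ (4 * l) ^ l * y.descFactorial l := Nat.mul_le_mul h1 le_rfl
        _ ≤ _ := Nat.le_add_left _ _
    · have hsplit : y.descFactorial (2 * l)
          = y.descFactorial l * (y - l).descFactorial l := by
        rw [two_mul, descFactorial_add]
      have hcmp : y.descFactorial l ≤ 2 ^ l * (y - l).descFactorial l := by
        rw [Nat.descFactorial_eq_prod_range, Nat.descFactorial_eq_prod_range]
        calc ∏ t ∈ Finset.range l, (y - t)
            ≤ ∏ t ∈ Finset.range l, 2 * (y - l - t) := by
              refine Finset.prod_le_prod' fun t ht => ?_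
              have htl := Finset.mem_range.mp ht
              omega
          _ = 2 ^ l * ∏ t ∈ Finset.range l, (y - l - t) := by
              rw [Finset.prod_mul_distrib, Finset.prod_const, Finset.card_range]
      calc (y.descFactorial l) ^ 2 = y.descFactorial l * y.descFactorial l := sq _
        _ ≤ y.descFactorial l * (2 ^ l * (y - l).descFactorial l) :=
            Nat.mul_le_mul le_rfl hcmp
        _ = 2 ^ l * y.descFactorial (2 * l) := by rw [hsplit]; ring
        _ ≤ _ := Nat.le_add_right _ _
  simp only [desc_eq]
  exact_mod_cast key

end FFMaux

set_option maxHeartbeats 2000000 in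
/-- Unbiasedness and variance of falling-factorial moment statistics in
the Poisson–exponential mixture: `E[Û_ℓ] = E[θ^ℓ]` with `θ = ∑_i c_i ϖ_i`, and
`Var[Û_ℓ] ≤ C_ℓ/(min{n,d}^ℓ d^ℓ)` for a constant `C_ℓ` depending only on `ℓ`. -/
theorem falling_factorial_moments (l : ℕ) (hl : 1 ≤ l) :
    ∃ C : ℝ, 0 < C ∧
      ∀ n d k : ℕ, 1 ≤ n → 1 ≤ d → 1 ≤ k → ∀ c ∈ simplex k,
        (∫ p, fallingStat n l p ∂ thetaYLaw n d k c
            = ∫ p, (∑ i, c i * p.1 i) ^ l ∂ thetaYLaw n d k c) ∧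
        variance (fallingStat n l) (thetaYLaw n d k c)
          ≤ C / ((min (n : ℝ) (d : ℝ)) ^ l * (d : ℝ) ^ l) := by
  have hl0 : (0:ℝ) < (l:ℝ) := by exact_mod_cast hl
  refine ⟨2 ^ l * (2 * l).factorial + (4 * (l:ℝ)) ^ l * l.factorial,
    add_pos (mul_pos (pow_pos two_pos l) (by exact_mod_cast Nat.factorial_pos (2 * l)))
      (mul_pos (pow_pos (by linarith) l) (by exact_mod_cast Nat.factorial_pos l)), ?_⟩
  intro n d k hn hd hk c hc
  obtain ⟨hc0, hc1⟩ := hc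
  have hdr : (0:ℝ) < (d:ℝ) := by exact_mod_cast hd
  have hnr : (0:ℝ) < (n:ℝ) := by exact_mod_cast hn
  have hnl : ((n:ℝ)) ^ l ≠ 0 := by positivity
  haveI := FFMaux.expMeas_prob hdr
  haveI := FFMaux.thetaYLaw_prob n d hd c hc0
  have hfs : ∀ (w : Fin k → ℝ) (y : ℕ),
      fallingStat n l (w, y) = FFMaux.desc l y / (n:ℝ) ^ l := fun _ _ => rfl
  have hFmeas : Measurable (fallingStat n l : (Fin k → ℝ) × ℕ → ℝ) :=
    (Measurable.of_discrete
      (f := fun y : ℕ => FFMaux.desc l y / (n:ℝ) ^ l)).comp measurable_snd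
  have hθmeas : Measurable fun w : Fin k → ℝ => ∑ i, c i * w i := FFMaux.measurable_theta c
  have hGmeas : Measurable fun p : (Fin k → ℝ) × ℕ => (∑ i, c i * p.1 i) ^ l :=
    (hθmeas.comp measurable_fst).pow_const l
  have hAmeas : MeasurableSet {w : Fin k → ℝ | (∑ i, c i * w i) ^ l < 0} :=
    measurableSet_lt (hθmeas.pow_const l) measurable_const
  have hGae : ∀ᵐ p ∂thetaYLaw n d k c, 0 ≤ (∑ i, c i * p.1 i) ^ l := by
    have h := FFMaux.thetaYLaw_ae_fst n d c hAmeas (by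
      filter_upwards [FFMaux.ae_nonneg_pi hdr] with w hw
      have hθ0 : 0 ≤ ∑ i, c i * w i :=
        Finset.sum_nonneg fun i _ => mul_nonneg (hc0 i) (hw i)
      simpa [Set.mem_setOf_eq, not_lt] using pow_nonneg hθ0 l)
    filter_upwards [h] with p hp
    simpa [Set.mem_setOf_eq, not_lt] using hp
  have key1 : ∫⁻ p, ENNReal.ofReal (fallingStat n l p) ∂thetaYLaw n d k c
      = ∫⁻ w, ENNReal.ofReal ((∑ i, c i * w i) ^ l)
          ∂(Measure.pi fun _ : Fin k => expMeas d) := by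
    rw [FFMaux.lintegral_thetaYLaw n d c hFmeas.ennreal_ofReal]
    refine lintegral_congr_ae ?_
    filter_upwards [FFMaux.ae_nonneg_pi hdr] with w hw
    have hθ0 : 0 ≤ ∑ i, c i * w i :=
      Finset.sum_nonneg fun i _ => mul_nonneg (hc0 i) (hw i)
    have hr0 : 0 ≤ (n:ℝ) * ∑ i, c i * w i := mul_nonneg hnr.le hθ0
    have hs : HasSum (fun y => FFMaux.pois ((n:ℝ) * ∑ i, c i * w i) y
        * (FFMaux.desc l y / (n:ℝ) ^ l))
        ((((n:ℝ) * ∑ i, c i * w i)) ^ l / (n:ℝ) ^ l) := by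
      simpa [mul_div_assoc] using (FFMaux.hasSum_pois_desc hr0 l).div_const ((n:ℝ) ^ l)
    have hsum := FFMaux.tsum_pois_mul hr0
      (fun y => div_nonneg (FFMaux.desc_nonneg l y) (by positivity)) hs
    simp_rw [hfs w]
    rw [hsum, mul_pow, mul_comm ((n:ℝ) ^ l), mul_div_assoc, div_self hnl, mul_one]
  have key2 : ∫⁻ p, ENNReal.ofReal ((∑ i, c i * p.1 i) ^ l) ∂thetaYLaw n d k c
      = ∫⁻ w, ENNReal.ofReal ((∑ i, c i * w i) ^ l)
          ∂(Measure.pi fun _ : Fin k => expMeas d) := by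
    rw [FFMaux.lintegral_thetaYLaw n d c hGmeas.ennreal_ofReal]
    refine lintegral_congr_ae ?_
    filter_upwards [FFMaux.ae_nonneg_pi hdr] with w hw
    have hθ0 : 0 ≤ ∑ i, c i * w i :=
      Finset.sum_nonneg fun i _ => mul_nonneg (hc0 i) (hw i)
    have hr0 : 0 ≤ (n:ℝ) * ∑ i, c i * w i := mul_nonneg hnr.le hθ0
    rw [ENNReal.tsum_mul_right, FFMaux.tsum_pois hr0, one_mul]
  have hFnn : 0 ≤ᵐ[thetaYLaw n d k c] fallingStat n l := by
    refine ae_of_all _ fun p => ?_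
    rw [show fallingStat n l p = FFMaux.desc l p.2 / (n:ℝ) ^ l from rfl]
    exact div_nonneg (FFMaux.desc_nonneg l p.2) (by positivity)
  have e1 : ∫ p, fallingStat n l p ∂thetaYLaw n d k c
      = (∫⁻ p, ENNReal.ofReal (fallingStat n l p) ∂thetaYLaw n d k c).toReal :=
    integral_eq_lintegral_of_nonneg_ae hFnn hFmeas.aestronglyMeasurable
  have e2 : ∫ p, (∑ i, c i * p.1 i) ^ l ∂thetaYLaw n d k c
      = (∫⁻ p, ENNReal.ofReal ((∑ i, c i * p.1 i) ^ l) ∂thetaYLaw n d k c).toReal :=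
    integral_eq_lintegral_of_nonneg_ae hGae hGmeas.aestronglyMeasurable
  constructor
  · rw [e1, e2, key1, key2]
  · have hvar := variance_le_expectation_sq (μ := thetaYLaw n d k c)
      hFmeas.aestronglyMeasurable
    set M := min (n:ℝ) (d:ℝ) with hM
    have hM1 : (1:ℝ) ≤ M := le_min (by exact_mod_cast hn) (by exact_mod_cast hd)
    have hM0 : (0:ℝ) < M := zero_lt_one.trans_le hM1
    have hMn : M ≤ (n:ℝ) := min_le_left _ _
    have hMd : M ≤ (d:ℝ) := min_le_right _ _
    set B : ℝ := 2 ^ l * ((2 * l).factorial / (d:ℝ) ^ (2 * l))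
      + (4 * (l:ℝ)) ^ l / (n:ℝ) ^ l * (l.factorial / (d:ℝ) ^ l) with hB
    have hBnn : 0 ≤ B := by positivity
    have hX2meas : Measurable fun p : (Fin k → ℝ) × ℕ => (fallingStat n l p) ^ 2 :=
      hFmeas.pow_const 2
    have hEsq : variance (fallingStat n l) (thetaYLaw n d k c)
        ≤ (∫⁻ p, ENNReal.ofReal ((fallingStat n l p) ^ 2) ∂thetaYLaw n d k c).toReal := by
      refine hvar.trans_eq ?_
      exact integral_eq_lintegral_of_nonneg_ae (ae_of_all _ fun p => sq_nonneg _)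
        hX2meas.aestronglyMeasurable
    have hlin : ∫⁻ p, ENNReal.ofReal ((fallingStat n l p) ^ 2) ∂thetaYLaw n d k c
        ≤ ENNReal.ofReal B := by
      rw [FFMaux.lintegral_thetaYLaw n d c hX2meas.ennreal_ofReal]
      have hstep : ∀ᵐ w ∂(Measure.pi fun _ : Fin k => expMeas d),
          (∑' y, ENNReal.ofReal (FFMaux.pois ((n:ℝ) * ∑ i, c i * w i) y)
            * ENNReal.ofReal ((fallingStat n l (w, y)) ^ 2))
          ≤ ENNReal.ofReal (2 ^ l) * ENNReal.ofReal ((∑ i, c i * w i) ^ (2 * l))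
            + ENNReal.ofReal ((4 * (l:ℝ)) ^ l / (n:ℝ) ^ l)
              * ENNReal.ofReal ((∑ i, c i * w i) ^ l) := by
        filter_upwards [FFMaux.ae_nonneg_pi hdr] with w hw
        have hθ0 : 0 ≤ ∑ i, c i * w i :=
          Finset.sum_nonneg fun i _ => mul_nonneg (hc0 i) (hw i)
        have hr0 : 0 ≤ (n:ℝ) * ∑ i, c i * w i := mul_nonneg hnr.le hθ0
        have hgle : ∀ y : ℕ, (fallingStat n l (w, y)) ^ 2
            ≤ (2 ^ l * FFMaux.desc (2 * l) y + (4 * (l:ℝ)) ^ l * FFMaux.desc l y)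
              / ((n:ℝ) ^ l) ^ 2 := by
          intro y
          rw [hfs, div_pow]
          exact (div_le_div_iff_of_pos_right (by positivity)).mpr (FFMaux.desc_sq_le hl y)
        have h1 := (FFMaux.hasSum_pois_desc hr0 (2 * l)).mul_left ((2:ℝ) ^ l)
        have h2 := (FFMaux.hasSum_pois_desc hr0 l).mul_left ((4 * (l:ℝ)) ^ l)
        have h3 := (h1.add h2).div_const (((n:ℝ) ^ l) ^ 2)
        have hfun : (fun y => ((2:ℝ) ^ l * (FFMaux.pois ((n:ℝ) * ∑ i, c i * w i) y
              * FFMaux.desc (2 * l) y)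
            + (4 * (l:ℝ)) ^ l * (FFMaux.pois ((n:ℝ) * ∑ i, c i * w i) y
              * FFMaux.desc l y)) / ((n:ℝ) ^ l) ^ 2)
            = fun y => FFMaux.pois ((n:ℝ) * ∑ i, c i * w i) y *
              ((2 ^ l * FFMaux.desc (2 * l) y + (4 * (l:ℝ)) ^ l * FFMaux.desc l y)
                / ((n:ℝ) ^ l) ^ 2) := by
          funext y; ring
        rw [hfun] at h3
        have hgnn : ∀ y : ℕ, 0 ≤ (2 ^ l * FFMaux.desc (2 * l) y
            + (4 * (l:ℝ)) ^ l * FFMaux.desc l y) / ((n:ℝ) ^ l) ^ 2 := fun y =>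
          div_nonneg (add_nonneg (mul_nonneg (by positivity) (FFMaux.desc_nonneg _ _))
            (mul_nonneg (by positivity) (FFMaux.desc_nonneg _ _))) (by positivity)
        have hval := FFMaux.tsum_pois_mul hr0 hgnn h3
        calc ∑' y, ENNReal.ofReal (FFMaux.pois ((n:ℝ) * ∑ i, c i * w i) y)
              * ENNReal.ofReal ((fallingStat n l (w, y)) ^ 2)
            ≤ ∑' y, ENNReal.ofReal (FFMaux.pois ((n:ℝ) * ∑ i, c i * w i) y)
              * ENNReal.ofReal ((2 ^ l * FFMaux.desc (2 * l) y
                + (4 * (l:ℝ)) ^ l * FFMaux.desc l y) / ((n:ℝ) ^ l) ^ 2) :=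
              ENNReal.tsum_le_tsum fun y =>
                mul_le_mul_right (ENNReal.ofReal_le_ofReal (hgle y)) _
          _ = ENNReal.ofReal ((2 ^ l * ((n:ℝ) * ∑ i, c i * w i) ^ (2 * l)
              + (4 * (l:ℝ)) ^ l * ((n:ℝ) * ∑ i, c i * w i) ^ l) / ((n:ℝ) ^ l) ^ 2) := hval
          _ = ENNReal.ofReal (2 ^ l * (∑ i, c i * w i) ^ (2 * l)
              + (4 * (l:ℝ)) ^ l / (n:ℝ) ^ l * (∑ i, c i * w i) ^ l) := by
              congr 1
              rw [mul_pow, mul_pow]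
              have h2l : ((n:ℝ)) ^ (2 * l) = ((n:ℝ) ^ l) ^ 2 := by
                rw [← pow_mul, mul_comm]
              rw [h2l]
              field_simp
              ring
          _ = ENNReal.ofReal (2 ^ l) * ENNReal.ofReal ((∑ i, c i * w i) ^ (2 * l))
              + ENNReal.ofReal ((4 * (l:ℝ)) ^ l / (n:ℝ) ^ l)
                * ENNReal.ofReal ((∑ i, c i * w i) ^ l) := by
              rw [ENNReal.ofReal_add (mul_nonneg (by positivity) (pow_nonneg hθ0 _))
                  (mul_nonneg (by positivity) (pow_nonneg hθ0 _)),
                ENNReal.ofReal_mul (by positivity), ENNReal.ofReal_mul (by positivity)]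
      calc ∫⁻ w, ∑' y, ENNReal.ofReal (FFMaux.pois ((n:ℝ) * ∑ i, c i * w i) y)
            * ENNReal.ofReal ((fallingStat n l (w, y)) ^ 2)
            ∂(Measure.pi fun _ : Fin k => expMeas d)
          ≤ ∫⁻ w, (ENNReal.ofReal (2 ^ l) * ENNReal.ofReal ((∑ i, c i * w i) ^ (2 * l))
              + ENNReal.ofReal ((4 * (l:ℝ)) ^ l / (n:ℝ) ^ l)
                * ENNReal.ofReal ((∑ i, c i * w i) ^ l))
            ∂(Measure.pi fun _ : Fin k => expMeas d) := lintegral_mono_ae hstep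
        _ = ENNReal.ofReal (2 ^ l)
              * ∫⁻ w, ENNReal.ofReal ((∑ i, c i * w i) ^ (2 * l))
                ∂(Measure.pi fun _ : Fin k => expMeas d)
            + ENNReal.ofReal ((4 * (l:ℝ)) ^ l / (n:ℝ) ^ l)
              * ∫⁻ w, ENNReal.ofReal ((∑ i, c i * w i) ^ l)
                ∂(Measure.pi fun _ : Fin k => expMeas d) := by
            rw [lintegral_add_left
                (((hθmeas.pow_const (2 * l)).ennreal_ofReal).const_mul _),
              lintegral_const_mul _ ((hθmeas.pow_const (2 * l)).ennreal_ofReal),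
              lintegral_const_mul _ ((hθmeas.pow_const l).ennreal_ofReal)]
        _ ≤ ENNReal.ofReal (2 ^ l) * ENNReal.ofReal ((2 * l).factorial / (d:ℝ) ^ (2 * l))
            + ENNReal.ofReal ((4 * (l:ℝ)) ^ l / (n:ℝ) ^ l)
              * ENNReal.ofReal (l.factorial / (d:ℝ) ^ l) :=
            add_le_add
              (mul_le_mul_right (FFMaux.lintegral_theta_pow hdr hc0 hc1 (2 * l)) _)
              (mul_le_mul_right (FFMaux.lintegral_theta_pow hdr hc0 hc1 l) _)
        _ = ENNReal.ofReal B := by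
            rw [← ENNReal.ofReal_mul (by positivity), ← ENNReal.ofReal_mul (by positivity),
              ← ENNReal.ofReal_add (by positivity) (by positivity)]
    have hfin : (∫⁻ p, ENNReal.ofReal ((fallingStat n l p) ^ 2)
        ∂thetaYLaw n d k c).toReal ≤ B := by
      have h := ENNReal.toReal_mono ENNReal.ofReal_ne_top hlin
      rwa [ENNReal.toReal_ofReal hBnn] at h
    refine (hEsq.trans hfin).trans ?_
    have hden : (0:ℝ) < M ^ l * (d:ℝ) ^ l := by positivity
    have hd2 : M ^ l * (d:ℝ) ^ l ≤ (d:ℝ) ^ (2 * l) := by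
      rw [two_mul, pow_add]
      exact mul_le_mul_of_nonneg_right (pow_le_pow_left₀ hM0.le hMd l) (by positivity)
    have hnd : M ^ l * (d:ℝ) ^ l ≤ (n:ℝ) ^ l * (d:ℝ) ^ l :=
      mul_le_mul_of_nonneg_right (pow_le_pow_left₀ hM0.le hMn l) (by positivity)
    have t1 : (2:ℝ) ^ l * ((2 * l).factorial / (d:ℝ) ^ (2 * l))
        ≤ 2 ^ l * (2 * l).factorial / (M ^ l * (d:ℝ) ^ l) := by
      rw [mul_div_assoc]
      exact mul_le_mul_of_nonneg_left
        (div_le_div_of_nonneg_left (by positivity) hden hd2) (by positivity)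
    have t2 : (4 * (l:ℝ)) ^ l / (n:ℝ) ^ l * (l.factorial / (d:ℝ) ^ l)
        ≤ (4 * (l:ℝ)) ^ l * l.factorial / (M ^ l * (d:ℝ) ^ l) := by
      rw [div_mul_div_comm]
      exact div_le_div_of_nonneg_left (by positivity) hden hnd
    calc B ≤ 2 ^ l * (2 * l).factorial / (M ^ l * (d:ℝ) ^ l)
          + (4 * (l:ℝ)) ^ l * l.factorial / (M ^ l * (d:ℝ) ^ l) := add_le_add t1 t2
      _ = (2 ^ l * (2 * l).factorial + (4 * (l:ℝ)) ^ l * l.factorial)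
          / (M ^ l * (d:ℝ) ^ l) := by rw [← add_div]


end
end

section
/- Stability of real roots of a monic polynomial under constant perturbation: let f be a monic polynomial of degree k over ℝ with k real roots x_1,…,x_k that are pairwise distinct, and let δ = min_{i ≠ j} |x_i − x_j|. Then for every real ε with 0 < ε < (δ/2)^k, the polynomial f + ε also has k real roots x_1^ε,…,x_k^ε (counted with multiplicity), and these can be indexed so that the 1-Wasserstein distance between the empirical measures satisfies (1/k)·min over permutations σ of ∑_{i=1}^k |x_i − x_{σ(i)}^ε| ≤ δ/2. -/
open MeasureTheory ProbabilityTheory Real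
open scoped ENNReal NNReal

noncomputable section

/-- Stability of real roots of a monic polynomial under constant
perturbation: let `f = ∏ (X − x_i)` have pairwise-distinct real roots `x_1,…,x_k` with
minimal gap `δ`.  Then for `0 < ε < (δ/2)^k`, the polynomial `f + ε` also has `k` real
roots `x^ε_1,…,x^ε_k` (with multiplicity), and the 1-Wasserstein distance between the two
empirical root measures is at most `δ/2`. -/
theorem root_stability (k : ℕ) (x : Fin k → ℝ) (hx : Function.Injective x)
    (f : Polynomial ℝ) (hf : f = ∏ i, (Polynomial.X - Polynomial.C (x i)))
    (δ : ℝ) (hδ : IsLeast {r : ℝ | ∃ i j : Fin k, i ≠ j ∧ r = |x i - x j|} δ)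
    (ε : ℝ) (hε0 : 0 < ε) (hεk : ε < (δ / 2) ^ k) :
    ∃ xe : Fin k → ℝ,
      f + Polynomial.C ε = ∏ i, (Polynomial.X - Polynomial.C (xe i)) ∧
      (1 / (k : ℝ)) * sortedLoss x xe ≤ δ / 2 := by
  classical
  obtain ⟨⟨i0, j0, hij0, hδval⟩, hδlb⟩ := hδ
  have hδpos : 0 < δ := by
    rw [hδval]
    exact abs_sub_pos.mpr fun h => hij0 (hx h)
  have hk : 0 < k := i0.pos
  have hkR : (0 : ℝ) < (k : ℝ) := Nat.cast_pos.mpr hk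
  set σ : Equiv.Perm (Fin k) := Tuple.sort x with hσdef
  set y : Fin k → ℝ := x ∘ σ with hydef
  have hymono : StrictMono y :=
    (Tuple.monotone_sort x).strictMono_of_injective (hx.comp σ.injective)
  have hgap : ∀ i j : Fin k, i < j → y i + δ ≤ y j := by
    intro i j hij
    have h1 : δ ≤ |x (σ i) - x (σ j)| :=
      hδlb ⟨σ i, σ j, fun h => hij.ne (σ.injective h), rfl⟩
    have h2 : y i < y j := hymono hij
    have hxy : x (σ i) = y i := rfl
    have hxy' : x (σ j) = y j := rfl
    rw [hxy, hxy', abs_sub_comm, abs_of_pos (by linarith)] at h1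
    linarith
  set F : ℝ → ℝ := fun t => ∏ j, (t - y j) with hFdef
  have hFeval : ∀ t, f.eval t = F t := by
    intro t
    rw [hf, Polynomial.eval_prod]
    simp only [Polynomial.eval_sub, Polynomial.eval_X, Polynomial.eval_C, hFdef]
    exact (Equiv.prod_comp σ fun j => t - x j).symm
  have hFcont : Continuous F :=
    continuous_finset_prod _ fun j _ => continuous_id.sub continuous_const
  set s : Fin (k + 1) → ℝ :=
    fun a => Fin.cases (y ⟨0, hk⟩ - δ / 2) (fun j => y j + δ / 2) a with hsdef
  have hssucc : ∀ i : Fin k, s i.succ = y i + δ / 2 := fun i => rfl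
  have hs0 : s 0 = y ⟨0, hk⟩ - δ / 2 := rfl
  have hs_lb : ∀ (a : Fin (k + 1)) (j : Fin k), (j : ℕ) < (a : ℕ) → y j + δ / 2 ≤ s a := by
    intro a
    induction a using Fin.cases with
    | zero => intro j hj; simp at hj
    | succ b =>
      intro j hj
      rw [Fin.val_succ] at hj
      have hjb : j ≤ b := by rw [Fin.le_def]; omega
      have : y j ≤ y b := hymono.monotone hjb
      rw [hssucc]
      linarith
  have hs_ub : ∀ (a : Fin (k + 1)) (j : Fin k), (a : ℕ) ≤ (j : ℕ) → s a ≤ y j - δ / 2 := by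
    intro a
    induction a using Fin.cases with
    | zero =>
      intro j _
      have : y ⟨0, hk⟩ ≤ y j := hymono.monotone (by simp [Fin.le_def])
      rw [hs0]; linarith
    | succ b =>
      intro j hj
      rw [Fin.val_succ] at hj
      have hbj : b < j := by rw [Fin.lt_def]; omega
      have := hgap b j hbj
      rw [hssucc]; linarith
  set e : Fin (k + 1) → ℝ :=
    fun a => ∏ j : Fin k, (if (a : ℕ) ≤ (j : ℕ) then (-1 : ℝ) else 1) with hedef
  have he1 : ∀ a, e a = 1 ∨ e a = -1 := by
    intro a
    have h : e a * e a = 1 := by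
      rw [hedef, ← Finset.prod_mul_distrib]
      apply Finset.prod_eq_one
      intro j _
      split <;> norm_num
    exact mul_self_eq_one_iff.mp h
  have hkey : ∀ a, (δ / 2) ^ k ≤ e a * F (s a) := by
    intro a
    have hrw : e a * F (s a)
        = ∏ j : Fin k, ((if (a : ℕ) ≤ (j : ℕ) then (-1 : ℝ) else 1) * (s a - y j)) := by
      rw [hedef, hFdef, ← Finset.prod_mul_distrib]
    rw [hrw]
    have hpow : (δ / 2) ^ k = ∏ _j : Fin k, (δ / 2) := by
      rw [Finset.prod_const, Finset.card_univ, Fintype.card_fin]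
    rw [hpow]
    apply Finset.prod_le_prod
    · intro j _; positivity
    · intro j _
      by_cases h : (a : ℕ) ≤ (j : ℕ)
      · have := hs_ub a j h
        simp only [h, if_pos]
        linarith
      · have := hs_lb a j (by omega)
        simp only [h, if_neg, not_false_iff, one_mul]
        linarith
  have halt : ∀ i : Fin k, e i.castSucc = -e i.succ := by
    intro i
    simp only [hedef]
    rw [← Finset.mul_prod_erase Finset.univ _ (Finset.mem_univ i),
      ← Finset.mul_prod_erase Finset.univ _ (Finset.mem_univ i)]
    have hprod :
        (∏ j ∈ Finset.univ.erase i, (if ((i.castSucc : Fin (k+1)) : ℕ) ≤ (j : ℕ) then (-1 : ℝ) else 1))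
        = ∏ j ∈ Finset.univ.erase i, (if ((i.succ : Fin (k+1)) : ℕ) ≤ (j : ℕ) then (-1 : ℝ) else 1) := by
      apply Finset.prod_congr rfl
      intro j hj
      have hji : (j : ℕ) ≠ (i : ℕ) :=
        fun h => (Finset.mem_erase.mp hj).1 (Fin.ext h)
      rw [Fin.coe_castSucc, Fin.val_succ]
      by_cases h : (i : ℕ) ≤ (j : ℕ)
      · rw [if_pos h, if_pos (by omega)]
      · rw [if_neg h, if_neg (by omega)]
    rw [hprod, Fin.coe_castSucc, Fin.val_succ]
    rw [if_pos le_rfl, if_neg (by omega)]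
    ring
  have hroots : ∀ i : Fin k, ∃ t ∈ Set.Ioo (s i.castSucc) (s i.succ), F t + ε = 0 := by
    intro i
    have hle : s i.castSucc ≤ s i.succ := by
      have h1 := hs_ub i.castSucc i (le_of_eq (Fin.coe_castSucc i))
      rw [hssucc]
      linarith
    have hcont : ContinuousOn (fun t => F t + ε) (Set.Icc (s i.castSucc) (s i.succ)) :=
      (hFcont.add continuous_const).continuousOn
    rcases he1 i.succ with h1 | h1
    · have hb : 0 < F (s i.succ) + ε := by
        have := hkey i.succ; rw [h1, one_mul] at this
        have hp : (0:ℝ) < (δ/2)^k := by positivity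
        linarith
      have ha : F (s i.castSucc) + ε < 0 := by
        have := hkey i.castSucc
        rw [halt i, h1] at this
        have : F (s i.castSucc) ≤ -(δ/2)^k := by nlinarith
        linarith
      have := intermediate_value_Ioo hle hcont (Set.mem_Ioo.mpr ⟨ha, hb⟩)
      obtain ⟨t, ht, ht0⟩ := this
      exact ⟨t, ht, ht0⟩
    · have hb : F (s i.succ) + ε < 0 := by
        have := hkey i.succ; rw [h1] at this
        have : F (s i.succ) ≤ -(δ/2)^k := by nlinarith
        linarith
      have ha : 0 < F (s i.castSucc) + ε := by
        have := hkey i.castSucc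
        rw [halt i, h1] at this
        have hp : (0:ℝ) < (δ/2)^k := by positivity
        nlinarith
      have := intermediate_value_Ioo' hle hcont (Set.mem_Ioo.mpr ⟨hb, ha⟩)
      obtain ⟨t, ht, ht0⟩ := this
      exact ⟨t, ht, ht0⟩
  choose r hrmem hrzero using hroots
  have hnear : ∀ i, |r i - y i| < δ / 2 := by
    intro i
    by_contra hcon
    push_neg at hcon
    have hall : ∀ j, δ / 2 ≤ |r i - y j| := by
      intro j
      rcases lt_trichotomy j i with hji | rfl | hij
      · have h1 : s i.castSucc < r i := (hrmem i).1
        have h2 : y j + δ / 2 ≤ s i.castSucc := by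
          apply hs_lb
          rw [Fin.coe_castSucc]
          exact hji
        exact le_abs.mpr (Or.inl (by linarith))
      · exact hcon
      · have h1 : r i < s i.succ := (hrmem i).2
        have h2 : s i.succ ≤ y j - δ / 2 := by
          apply hs_ub
          rw [Fin.val_succ]
          exact hij
        exact le_abs.mpr (Or.inr (by linarith))
    have habs : |F (r i)| = ε := by
      have h0 := hrzero i
      have hF' : F (r i) = -ε := by linarith
      rw [hF', abs_neg, abs_of_pos hε0]
    have hge : (δ / 2) ^ k ≤ |F (r i)| := by
      have hprodabs : |F (r i)| = ∏ j, |r i - y j| := by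
        rw [hFdef]; exact Finset.abs_prod _ _
      rw [hprodabs]
      have hpow : (δ / 2) ^ k = ∏ _j : Fin k, (δ / 2) := by
        rw [Finset.prod_const, Finset.card_univ, Fintype.card_fin]
      rw [hpow]
      exact Finset.prod_le_prod (fun j _ => by positivity) fun j _ => hall j
    rw [habs] at hge
    linarith
  have hrmono : StrictMono r := by
    intro i j hij
    have h1 := abs_lt.mp (hnear i)
    have h2 := abs_lt.mp (hnear j)
    have h3 := hgap i j hij
    linarith [h1.2, h2.1]
  set Q : Polynomial ℝ := ∏ i, (Polynomial.X - Polynomial.C (r i)) with hQdef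
  have hfm : f.Monic := by
    rw [hf]
    exact Polynomial.monic_prod_of_monic _ _ fun i _ => Polynomial.monic_X_sub_C _
  have hQm : Q.Monic :=
    Polynomial.monic_prod_of_monic _ _ fun i _ => Polynomial.monic_X_sub_C _
  have hfnd : f.natDegree = k := by
    rw [hf, Polynomial.natDegree_prod _ _ fun i _ => Polynomial.X_sub_C_ne_zero _]
    simp [Polynomial.natDegree_X_sub_C]
  have hQnd : Q.natDegree = k := by
    rw [hQdef, Polynomial.natDegree_prod _ _ fun i _ => Polynomial.X_sub_C_ne_zero _]
    simp [Polynomial.natDegree_X_sub_C]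
  have hkeyP : f + Polynomial.C ε = Q := by
    have heval : ∀ i, (f + Polynomial.C ε - Q).eval (r i) = 0 := by
      intro i
      have hQz : Q.eval (r i) = 0 := by
        rw [hQdef, Polynomial.eval_prod]
        apply Finset.prod_eq_zero (Finset.mem_univ i)
        simp
      simp only [Polynomial.eval_sub, Polynomial.eval_add, Polynomial.eval_C, hQz, hFeval]
      have := hrzero i
      linarith
    by_cases h0 : f + Polynomial.C ε - Q = 0
    · exact sub_eq_zero.mp h0
    · exfalso
      apply h0
      apply Polynomial.eq_zero_of_natDegree_lt_card_of_eval_eq_zero _ hrmono.injective heval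
      rw [Fintype.card_fin]
      rw [Polynomial.natDegree_lt_iff_degree_lt h0]
      have h1 : (f - Q).degree < (k : ℕ) := by
        have hd : f.degree = Q.degree := by
          rw [Polynomial.degree_eq_natDegree hfm.ne_zero,
            Polynomial.degree_eq_natDegree hQm.ne_zero, hfnd, hQnd]
        have := Polynomial.degree_sub_lt hd hfm.ne_zero
          (by rw [hfm.leadingCoeff, hQm.leadingCoeff])
        rwa [Polynomial.degree_eq_natDegree hfm.ne_zero, hfnd] at this
      have h2 : (Polynomial.C ε).degree < (k : ℕ) := by
        apply lt_of_le_of_lt Polynomial.degree_C_le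
        exact_mod_cast hk
      have hre : f + Polynomial.C ε - Q = f - Q + Polynomial.C ε := by ring
      rw [hre]
      exact lt_of_le_of_lt (Polynomial.degree_add_le _ _) (max_lt h1 h2)
  refine ⟨fun i => r (σ⁻¹ i), ?_, ?_⟩
  · rw [hkeyP, hQdef]
    exact (Equiv.prod_comp σ⁻¹ fun i => Polynomial.X - Polynomial.C (r i)).symm
  · have hle : sortedLoss x (fun i => r (σ⁻¹ i)) ≤ ∑ i, |x i - r (σ⁻¹ i)| := by
      have h := ciInf_le
        (f := fun τ : Equiv.Perm (Fin k) => ∑ i, |x (τ i) - r (σ⁻¹ i)|)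
        (Set.Finite.bddBelow (Set.finite_range _)) 1
      simpa [sortedLoss] using h
    have hsum : ∑ i, |x i - r (σ⁻¹ i)| ≤ (k : ℝ) * (δ / 2) := by
      have hstep : ∀ i : Fin k, |x i - r (σ⁻¹ i)| ≤ δ / 2 := by
        intro i
        have hxi : x i = y (σ⁻¹ i) := by
          rw [hydef]; simp
        rw [hxi, abs_sub_comm]
        exact (hnear (σ⁻¹ i)).le
      calc ∑ i, |x i - r (σ⁻¹ i)| ≤ ∑ _i : Fin k, (δ / 2) :=
            Finset.sum_le_sum fun i _ => hstep i
        _ = (k : ℝ) * (δ / 2) := by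
            rw [Finset.sum_const, Finset.card_univ, Fintype.card_fin, nsmul_eq_mul]
    calc (1 / (k : ℝ)) * sortedLoss x (fun i => r (σ⁻¹ i))
        ≤ (1 / (k : ℝ)) * ((k : ℝ) * (δ / 2)) :=
          mul_le_mul_of_nonneg_left (hle.trans hsum) (by positivity)
      _ = δ / 2 := by field_simp

end
end
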